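/- Let ρ₀ and ρ₁ be the two-qubit density matrices ρ_b = (1/2)(P_b ⊗ (I₂/2)) + (1/2)((I₂/2) ⊗ (H * P_b * H)) for b = 0, 1. Then for every 4×4 complex matrix M such that M is positive semidefinite and I₄ − M is positive semidefinite, the real part of (1/2) · Tr(ρ₀ * M) + (1/2) · Tr(ρ₁ * (I₄ − M)) is at most 3/4. That is, no two-outcome measurement can guess Alice's uniformly random input bit in Protocol 1 with probability exceeding 3/4. -/

import Mathlib

open Matrix Kronecker ComplexOrder

noncomputable section

def P0 : Matrix (Fin 2) (Fin 2) ℂ := !![1, 0; 0, 0]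

def P1 : Matrix (Fin 2) (Fin 2) ℂ := !![0, 0; 0, 1]

/-- The Hadamard gate. -/
def Hg : Matrix (Fin 2) (Fin 2) ℂ := (Real.sqrt 2 : ℂ)⁻¹ • !![1, 1; 1, -1]

/-- The average state Alice sends in Protocol 1 when her input bit corresponds to the
projector `Pb`, as a 4×4 matrix via the lexicographic identification
`Fin 2 × Fin 2 ≃ Fin 4`. -/
def rho (Pb : Matrix (Fin 2) (Fin 2) ℂ) : Matrix (Fin 4) (Fin 4) ℂ :=
  Matrix.reindex finProdFinEquiv finProdFinEquiv
    ((1/2 : ℂ) • (Pb ⊗ₖ ((1/2 : ℂ) • (1 : Matrix (Fin 2) (Fin 2) ℂ))) +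
     (1/2 : ℂ) • (((1/2 : ℂ) • (1 : Matrix (Fin 2) (Fin 2) ℂ)) ⊗ₖ (Hg * Pb * Hg)))

lemma sqrt2_sq : ((Real.sqrt 2 : ℂ))⁻¹ * ((Real.sqrt 2 : ℂ))⁻¹ = 1/2 := by
  rw [← mul_inv]
  norm_cast
  rw [Real.mul_self_sqrt (by norm_num)]
  norm_num

lemma HP0H : Hg * P0 * Hg = (1/2 : ℂ) • !![1, 1; 1, 1] := by
  simp only [Hg, P0, smul_mul_assoc, mul_smul_comm, smul_smul, sqrt2_sq]
  congr 1
  norm_num [Matrix.mul_fin_two]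

lemma HP1H : Hg * P1 * Hg = (1/2 : ℂ) • !![1, -1; -1, 1] := by
  simp only [Hg, P1, smul_mul_assoc, mul_smul_comm, smul_smul, sqrt2_sq]
  congr 1
  norm_num [Matrix.mul_fin_two]

lemma rho0_eq : rho P0 = !![3/8,1/8,0,0; 1/8,3/8,0,0; 0,0,1/8,1/8; 0,0,1/8,1/8] := by
  unfold rho
  rw [HP0H]
  ext i j
  fin_cases i <;> fin_cases j <;>
    simp [P0, finProdFinEquiv, Matrix.one_apply, Fin.divNat, Fin.modNat,
      show ((0:Fin 4):ℕ) = 0 from rfl, show ((1:Fin 4):ℕ) = 1 from rfl,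
      show ((2:Fin 4):ℕ) = 2 from rfl, show ((3:Fin 4):ℕ) = 3 from rfl,
      Matrix.vecHead, Matrix.vecTail] <;> norm_num

lemma rho1_eq : rho P1 = !![1/8,-1/8,0,0; -1/8,1/8,0,0; 0,0,3/8,-1/8; 0,0,-1/8,3/8] := by
  unfold rho
  rw [HP1H]
  ext i j
  fin_cases i <;> fin_cases j <;>
    simp [P1, finProdFinEquiv, Matrix.one_apply, Fin.divNat, Fin.modNat,
      show ((0:Fin 4):ℕ) = 0 from rfl, show ((1:Fin 4):ℕ) = 1 from rfl,
      show ((2:Fin 4):ℕ) = 2 from rfl, show ((3:Fin 4):ℕ) = 3 from rfl,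
      Matrix.vecHead, Matrix.vecTail] <;> norm_num

def Cm : Matrix (Fin 1) (Fin 4) ℂ := !![1/2, 1/2, 0, 0]
def Dm : Matrix (Fin 1) (Fin 4) ℂ := !![0, 0, 1/2, -1/2]

lemma delta_eq : rho P0 = rho P1 + Cmᴴ * Cm - Dmᴴ * Dm := by
  rw [rho0_eq, rho1_eq]
  ext i j
  fin_cases i <;> fin_cases j <;>
    simp [Cm, Dm, Matrix.mul_apply, Matrix.conjTranspose_apply, Fin.sum_univ_succ, Matrix.vecHead, Matrix.vecTail, map_inv₀, map_ofNat] <;> norm_num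

lemma trace_re_nonneg {n : Type*} [Fintype n] [DecidableEq n] {M : Matrix n n ℂ}
    (h : M.PosSemidef) : 0 ≤ M.trace.re := by
  have hd : ∀ i, 0 ≤ M i i := fun i => by
    exact h.diag_nonneg
  have : ∀ i, 0 ≤ (M i i).re := fun i => (Complex.le_def.mp (hd i)).1
  simp only [Matrix.trace, Matrix.diag, Complex.re_sum]
  exact Finset.sum_nonneg fun i _ => this i

lemma mul_trace_re_nonneg {n : Type*} [Fintype n] [DecidableEq n]
    {A B : Matrix n n ℂ} (hA : A.PosSemidef) (hB : B.PosSemidef) :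
    0 ≤ (A * B).trace.re := by
  open scoped MatrixOrder in obtain ⟨C, rfl⟩ := CStarAlgebra.nonneg_iff_eq_star_mul_self.mp hA.nonneg
  rw [Matrix.mul_assoc, Matrix.trace_mul_comm]
  exact trace_re_nonneg (hB.mul_mul_conjTranspose_same C)

/-- No two-outcome measurement `{M, I − M}` can guess Alice's uniformly random input
bit in Protocol 1 with probability exceeding 3/4. -/
theorem guessing_probability_le_three_quarters (M : Matrix (Fin 4) (Fin 4) ℂ)
    (hM : M.PosSemidef) (hM' : ((1 : Matrix (Fin 4) (Fin 4) ℂ) - M).PosSemidef) :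
    ((1/2 : ℂ) * (rho P0 * M).trace +
      (1/2 : ℂ) * (rho P1 * ((1 : Matrix (Fin 4) (Fin 4) ℂ) - M)).trace).re ≤ 3/4 := by
  have hTr1 : (rho P1).trace = 1 := by
    rw [rho1_eq]; simp [Matrix.trace, Fin.sum_univ_four]; norm_num
  have hTrA : (Cmᴴ * Cm).trace = 1/2 := by
    simp [Cm, Matrix.trace, Matrix.diag, Matrix.mul_apply, Matrix.conjTranspose_apply,
      Fin.sum_univ_four, Fin.sum_univ_succ, map_inv₀, map_ofNat]
    norm_num
  have key : (1/2 : ℂ) * (rho P0 * M).trace +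
      (1/2 : ℂ) * (rho P1 * ((1 : Matrix (Fin 4) (Fin 4) ℂ) - M)).trace =
      3/4 - (1/2 : ℂ) * ((Cmᴴ * Cm) * ((1 : Matrix (Fin 4) (Fin 4) ℂ) - M)).trace -
      (1/2 : ℂ) * ((Dmᴴ * Dm) * M).trace := by
    rw [delta_eq]
    simp only [Matrix.add_mul, Matrix.sub_mul, Matrix.mul_sub, Matrix.mul_one,
      Matrix.trace_add, Matrix.trace_sub, hTr1, hTrA]
    ring
  rw [key]
  have h1 : 0 ≤ (((Cmᴴ * Cm)) * ((1 : Matrix (Fin 4) (Fin 4) ℂ) - M)).trace.re :=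
    mul_trace_re_nonneg (Matrix.posSemidef_conjTranspose_mul_self Cm) hM'
  have h2 : 0 ≤ (((Dmᴴ * Dm)) * M).trace.re :=
    mul_trace_re_nonneg (Matrix.posSemidef_conjTranspose_mul_self Dm) hM
  simp only [Complex.sub_re, Complex.mul_re, Complex.ofReal_re]
  norm_num
  linarith
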